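/- For the coupled linear system ẇ = −w − Lw − Lα, α̇ = Lw on ℝᵐ × ℝᵐ with L symmetric positive semidefinite, the function V = ½‖ẇ‖² + ½‖α̇‖² satisfies V̇ = −‖ẇ‖² − ẇᵀLẇ ≤ 0 along C² solutions. In particular ẇ(t) → 0 as t → ∞. -/

import Mathlib

open Matrix Filter

lemma dotDeriv {m : ℕ} {u v : ℝ → Fin m → ℝ} {u' v' : Fin m → ℝ} {t : ℝ}
    (hu : HasDerivAt u u' t) (hv : HasDerivAt v v' t) :
    HasDerivAt (fun s => u s ⬝ᵥ v s) (u' ⬝ᵥ v t + u t ⬝ᵥ v') t := by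
  have h : ∀ i ∈ Finset.univ, HasDerivAt (fun s => u s i * v s i)
      (u' i * v t i + u t i * v' i) t := fun i _ =>
    (hasDerivAt_pi.1 hu i).mul (hasDerivAt_pi.1 hv i)
  have := HasDerivAt.fun_sum h
  simpa [dotProduct, Finset.sum_add_distrib] using this

lemma mulVecDeriv {m : ℕ} (L : Matrix (Fin m) (Fin m) ℝ) {u : ℝ → Fin m → ℝ}
    {u' : Fin m → ℝ} {t : ℝ} (hu : HasDerivAt u u' t) :
    HasDerivAt (fun s => L.mulVec (u s)) (L.mulVec u') t := by
  rw [hasDerivAt_pi]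
  intro i
  simp only [Matrix.mulVec, dotProduct]
  exact HasDerivAt.fun_sum fun j _ => (hasDerivAt_pi.1 hu j).const_mul (L i j)

lemma symmDot {m : ℕ} {L : Matrix (Fin m) (Fin m) ℝ} (hsym : L.IsSymm)
    (u v : Fin m → ℝ) : u ⬝ᵥ L.mulVec v = v ⬝ᵥ L.mulVec u := by
  rw [Matrix.dotProduct_mulVec, dotProduct_comm]
  congr 1
  rw [← Matrix.mulVec_transpose, hsym.eq]

lemma dotSelfNonneg {m : ℕ} (v : Fin m → ℝ) : 0 ≤ v ⬝ᵥ v :=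
  Finset.sum_nonneg fun i _ => mul_self_nonneg _

lemma sqLeDotSelf {m : ℕ} (v : Fin m → ℝ) (i : Fin m) : v i * v i ≤ v ⬝ᵥ v :=
  Finset.single_le_sum (fun j _ => mul_self_nonneg (v j)) (Finset.mem_univ i)

set_option maxHeartbeats 1000000 in
/-- For the coupled system `ẇ = −w − Lw − Lα`, `α̇ = Lw` with `L` symmetric PSD, the
Krasovskii function `V = ½‖ẇ‖² + ½‖α̇‖²` satisfies `V̇ = −‖ẇ‖² − ẇᵀLẇ ≤ 0`, and
`ẇ(t) → 0` as `t → ∞`. -/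
theorem stmt7 (m : ℕ) (L : Matrix (Fin m) (Fin m) ℝ)
    (hsym : L.IsSymm) (hpsd : ∀ v : Fin m → ℝ, 0 ≤ v ⬝ᵥ L.mulVec v)
    (w α w' α' w'' : ℝ → Fin m → ℝ)
    (hw : ∀ t, HasDerivAt w (w' t) t)
    (hα : ∀ t, HasDerivAt α (α' t) t)
    (hw' : ∀ t, HasDerivAt w' (w'' t) t)
    (hodew : ∀ t, w' t = -(w t) - L.mulVec (w t) - L.mulVec (α t))
    (hodeα : ∀ t, α' t = L.mulVec (w t)) :
    (∀ t : ℝ,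
        HasDerivAt (fun s => (1 / 2) * (w' s ⬝ᵥ w' s) + (1 / 2) * (α' s ⬝ᵥ α' s))
          (-(w' t ⬝ᵥ w' t) - w' t ⬝ᵥ L.mulVec (w' t)) t ∧
        -(w' t ⬝ᵥ w' t) - w' t ⬝ᵥ L.mulVec (w' t) ≤ 0) ∧
      Tendsto w' atTop (nhds 0) := by
  -- α' equals L w, so it is differentiable with derivative L w'
  have hα'deriv : ∀ t, HasDerivAt α' (L.mulVec (w' t)) t := by
    intro t
    have h0 : HasDerivAt (fun s => L.mulVec (w s)) (L.mulVec (w' t)) t := mulVecDeriv L (hw t)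
    exact h0.congr_of_eventuallyEq (Eventually.of_forall fun s => hodeα s)
  -- w'' from differentiating the ODE
  have hw''eq : ∀ t, w'' t = -(w' t) - L.mulVec (w' t) - L.mulVec (α' t) := by
    intro t
    have h0 : HasDerivAt (fun s => -(w s) - L.mulVec (w s) - L.mulVec (α s))
        (-(w' t) - L.mulVec (w' t) - L.mulVec (α' t)) t :=
      (((hw t).neg).sub (mulVecDeriv L (hw t))).sub (mulVecDeriv L (hα t))
    exact (hw' t).unique (h0.congr_of_eventuallyEq (Eventually.of_forall fun s => hodew s))
  have hddot : ∀ t, w' t ⬝ᵥ w'' t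
      = -(w' t ⬝ᵥ w' t) - w' t ⬝ᵥ L.mulVec (w' t) - α' t ⬝ᵥ L.mulVec (w' t) := by
    intro t
    rw [hw''eq t, dotProduct_sub, dotProduct_sub, dotProduct_neg,
      symmDot hsym (w' t) (α' t)]
  -- derivative of g
  have hgderiv : ∀ t, HasDerivAt
      (fun s => (1 / 2) * (w' s ⬝ᵥ w' s) + (1 / 2) * (α' s ⬝ᵥ α' s))
      (-(w' t ⬝ᵥ w' t) - w' t ⬝ᵥ L.mulVec (w' t)) t := by
    intro t
    have h1 : HasDerivAt (fun s => w' s ⬝ᵥ w' s) (w'' t ⬝ᵥ w' t + w' t ⬝ᵥ w'' t) t :=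
      dotDeriv (hw' t) (hw' t)
    have h2 : HasDerivAt (fun s => α' s ⬝ᵥ α' s)
        (L.mulVec (w' t) ⬝ᵥ α' t + α' t ⬝ᵥ L.mulVec (w' t)) t :=
      dotDeriv (hα'deriv t) (hα'deriv t)
    have h3 := (h1.const_mul ((1:ℝ)/2)).add (h2.const_mul ((1:ℝ)/2))
    convert h3 using 1
    case e'_4 => rfl
    case e'_5 => rfl
    case e'_8 => rfl
    rw [dotProduct_comm (w'' t) (w' t), dotProduct_comm (L.mulVec (w' t)) (α' t),
      hddot t]
    ring
  have hVdotNonpos : ∀ t, -(w' t ⬝ᵥ w' t) - w' t ⬝ᵥ L.mulVec (w' t) ≤ 0 := by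
    intro t
    have := dotSelfNonneg (w' t)
    have := hpsd (w' t)
    linarith
  refine ⟨fun t => ⟨hgderiv t, hVdotNonpos t⟩, ?_⟩
  -- Part 2 : w' → 0
  set g : ℝ → ℝ := fun s => (1 / 2) * (w' s ⬝ᵥ w' s) + (1 / 2) * (α' s ⬝ᵥ α' s) with hgdef
  set f : ℝ → ℝ := fun s => w' s ⬝ᵥ w' s with hfdef
  have hgnonneg : ∀ t, 0 ≤ g t := by
    intro t
    have := dotSelfNonneg (w' t); have := dotSelfNonneg (α' t)
    simp only [hgdef]; nlinarith
  have hfnonneg : ∀ t, 0 ≤ f t := fun t => dotSelfNonneg (w' t)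
  have hgd : ∀ t, HasDerivAt g (-(f t) - w' t ⬝ᵥ L.mulVec (w' t)) t := hgderiv
  have hganti : Antitone g := by
    apply antitone_of_deriv_nonpos
    · exact fun t => ((hgd t).differentiableAt)
    · intro t
      rw [(hgd t).deriv]
      have := hfnonneg t; have := hpsd (w' t)
      linarith
  have hbdd : BddBelow (Set.range g) := ⟨0, by rintro x ⟨t, rfl⟩; exact hgnonneg t⟩
  set c : ℝ := ⨅ t, g t with hcdef
  have hgc : Tendsto g atTop (nhds c) := tendsto_atTop_ciInf hganti hbdd
  have hcle : ∀ t, c ≤ g t := fun t => ciInf_le hbdd t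
  -- pointwise bounds valid for t ≥ 0
  set B : ℝ := Real.sqrt (2 * g 0) with hBdef
  have hBnonneg : 0 ≤ B := Real.sqrt_nonneg _
  have hf_le : ∀ t, 0 ≤ t → f t ≤ 2 * g 0 := by
    intro t ht
    have h1 : g t ≤ g 0 := hganti ht
    have h2 : f t ≤ 2 * g t := by
      have := dotSelfNonneg (α' t)
      simp only [hgdef, hfdef]; nlinarith
    linarith
  have hα'_le : ∀ t, 0 ≤ t → α' t ⬝ᵥ α' t ≤ 2 * g 0 := by
    intro t ht
    have h1 : g t ≤ g 0 := hganti ht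
    have h2 : α' t ⬝ᵥ α' t ≤ 2 * g t := by
      have := dotSelfNonneg (w' t)
      simp only [hgdef]; nlinarith
    linarith
  have habs_of_dot : ∀ (v : Fin m → ℝ), v ⬝ᵥ v ≤ 2 * g 0 → ∀ i, |v i| ≤ B := by
    intro v hv i
    have h1 : v i * v i ≤ 2 * g 0 := le_trans (sqLeDotSelf v i) hv
    have : |v i| = Real.sqrt (v i * v i) := by
      rw [← Real.sqrt_mul_self (abs_nonneg (v i)), abs_mul_abs_self]
    rw [this, hBdef]
    exact Real.sqrt_le_sqrt h1
  have hw'bd : ∀ t, 0 ≤ t → ∀ i, |w' t i| ≤ B :=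
    fun t ht => habs_of_dot _ (hf_le t ht)
  have hα'bd : ∀ t, 0 ≤ t → ∀ i, |α' t i| ≤ B :=
    fun t ht => habs_of_dot _ (hα'_le t ht)
  set A : ℝ := ∑ i, ∑ j, |L i j| with hAdef
  have hrow_le_A : ∀ i, ∑ j, |L i j| ≤ A := by
    intro i
    exact Finset.single_le_sum (f := fun i => ∑ j, |L i j|)
      (fun j _ => Finset.sum_nonneg fun k _ => abs_nonneg _) (Finset.mem_univ i)
  have hmulVec_bd : ∀ (v : Fin m → ℝ), (∀ j, |v j| ≤ B) → ∀ i, |L.mulVec v i| ≤ A * B := by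
    intro v hv i
    have h1 : |L.mulVec v i| ≤ ∑ j, |L i j| * B := by
      simp only [Matrix.mulVec, dotProduct]
      refine le_trans (Finset.abs_sum_le_sum_abs _ _) ?_
      refine Finset.sum_le_sum fun j _ => ?_
      rw [abs_mul]
      exact mul_le_mul_of_nonneg_left (hv j) (abs_nonneg _)
    calc |L.mulVec v i| ≤ ∑ j, |L i j| * B := h1
      _ = (∑ j, |L i j|) * B := by rw [Finset.sum_mul]
      _ ≤ A * B := mul_le_mul_of_nonneg_right (hrow_le_A i) hBnonneg
  have hw''bd : ∀ t, 0 ≤ t → ∀ i, |w'' t i| ≤ B + 2 * (A * B) := by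
    intro t ht i
    have h1 : w'' t i = -(w' t i) - L.mulVec (w' t) i - L.mulVec (α' t) i := by
      rw [hw''eq t]; simp
    rw [h1]
    have h2 := hw'bd t ht i
    have h3 := hmulVec_bd _ (hw'bd t ht) i
    have h4 := hmulVec_bd _ (hα'bd t ht) i
    calc |(-(w' t i) - L.mulVec (w' t) i - L.mulVec (α' t) i)|
        ≤ |(-(w' t i) - L.mulVec (w' t) i)| + |L.mulVec (α' t) i| := abs_sub _ _
      _ ≤ |(-(w' t i))| + |L.mulVec (w' t) i| + |L.mulVec (α' t) i| := by
          have := abs_sub (-(w' t i)) (L.mulVec (w' t) i); linarith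
      _ = |w' t i| + |L.mulVec (w' t) i| + |L.mulVec (α' t) i| := by rw [abs_neg]
      _ ≤ B + 2 * (A * B) := by linarith
  set K : ℝ := 2 * (m * (B * (B + 2 * (A * B)))) + 1 with hKdef
  have hABnonneg : 0 ≤ A * B := by
    have : (0:ℝ) ≤ A := Finset.sum_nonneg fun i _ => Finset.sum_nonneg fun j _ => abs_nonneg _
    positivity
  have hKpos : 0 < K := by
    have : (0:ℝ) ≤ m * (B * (B + 2 * (A * B))) := by positivity
    linarith
  have hfderiv : ∀ t, HasDerivAt f (2 * (w' t ⬝ᵥ w'' t)) t := by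
    intro t
    have h1 := dotDeriv (hw' t) (hw' t)
    convert h1 using 1
    rw [dotProduct_comm (w'' t) (w' t)]; ring
  clear_value g f c B A K
  have hf'bd : ∀ t, 0 ≤ t → |2 * (w' t ⬝ᵥ w'' t)| ≤ K := by
    intro t ht
    have h1 : |w' t ⬝ᵥ w'' t| ≤ m * (B * (B + 2 * (A * B))) := by
      refine le_trans (Finset.abs_sum_le_sum_abs _ _) ?_
      have h2 : ∀ i : Fin m, |w' t i * w'' t i| ≤ B * (B + 2 * (A * B)) := by
        intro i
        rw [abs_mul]
        exact mul_le_mul (hw'bd t ht i) (hw''bd t ht i) (abs_nonneg _) hBnonneg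
      calc (∑ i, |w' t i * w'' t i|) ≤ ∑ _i : Fin m, B * (B + 2 * (A * B)) :=
            Finset.sum_le_sum fun i _ => h2 i
        _ = m * (B * (B + 2 * (A * B))) := by
            rw [Finset.sum_const, Finset.card_univ, Fintype.card_fin, nsmul_eq_mul]
    rw [abs_mul, abs_two]
    simp only [hKdef]
    linarith
  -- Lipschitz-type lower estimate for f on [t0, ∞) ∩ [0, ∞)
  have hflip : ∀ t0 s : ℝ, 0 ≤ t0 → t0 ≤ s → f t0 - K * (s - t0) ≤ f s := by
    intro t0 s ht0 hts
    have hmono : MonotoneOn (fun x => f x + K * x) (Set.Ici (0:ℝ)) := by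
      apply monotoneOn_of_deriv_nonneg (convex_Ici 0)
      · have hfc : Continuous f := by
          have : Differentiable ℝ f := fun x => (hfderiv x).differentiableAt
          exact this.continuous
        exact (hfc.add (continuous_const.mul continuous_id)).continuousOn
      · intro x _
        exact (((hfderiv x).add ((hasDerivAt_id x).const_mul K)).differentiableAt).differentiableWithinAt
      · intro x hx
        have hx0 : 0 ≤ x := le_of_lt (by simpa using hx)
        have hd : HasDerivAt (fun x => f x + K * x) (2 * (w' x ⬝ᵥ w'' x) + K * 1) x :=
          (hfderiv x).add ((hasDerivAt_id x).const_mul K)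
        rw [hd.deriv]
        have := hf'bd x hx0
        have := abs_le.1 this
        linarith [this.1]
    have := hmono (Set.mem_Ici.2 ht0) (Set.mem_Ici.2 (le_trans ht0 hts)) hts
    simp only at this
    linarith
  -- f → 0
  have hf0 : Tendsto f atTop (nhds 0) := by
    rw [Metric.tendsto_atTop]
    intro ε hε
    obtain ⟨δ, hδpos, hKδ⟩ : ∃ δ : ℝ, 0 < δ ∧ K * δ = ε / 2 := by
      refine ⟨ε / (2 * K), div_pos hε (by linarith), ?_⟩
      have hKne : K ≠ 0 := ne_of_gt hKpos
      field_simp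
    obtain ⟨T, hT⟩ := (Metric.tendsto_atTop.1 hgc) (ε * δ / 4) (by positivity)
    refine ⟨max T 0, fun t ht => ?_⟩
    have htT : T ≤ t := le_trans (le_max_left _ _) ht
    have ht0 : 0 ≤ t := le_trans (le_max_right _ _) ht
    have hft : f t < ε := by
      by_contra hcon
      push_neg at hcon
      -- f ≥ ε/2 on [t, t+δ]
      have hfon : ∀ s, t ≤ s → s ≤ t + δ → ε / 2 ≤ f s := by
        intro s hs1 hs2
        have := hflip t s ht0 hs1
        have hKs : K * (s - t) ≤ K * δ := by
          apply mul_le_mul_of_nonneg_left _ (le_of_lt hKpos)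
          linarith
        linarith only [this, hcon, hKs, hKδ]
      -- the auxiliary function g + (ε/2)·id is antitone on [t, t+δ]
      have hanti2 : AntitoneOn (fun x => g x + (ε / 2) * x) (Set.Icc t (t + δ)) := by
        apply antitoneOn_of_deriv_nonpos (convex_Icc _ _)
        · have hgcont : Continuous g := by
            have : Differentiable ℝ g := fun x => (hgd x).differentiableAt
            exact this.continuous
          exact (hgcont.add (continuous_const.mul continuous_id)).continuousOn
        · intro x _
          exact (((hgd x).add ((hasDerivAt_id x).const_mul (ε/2))).differentiableAt).differentiableWithinAt
        · intro x hx
          have hx' : t ≤ x ∧ x ≤ t + δ := by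
            have := interior_subset (s := Set.Icc t (t+δ)) hx
            exact ⟨this.1, this.2⟩
          have hd : HasDerivAt (fun x => g x + (ε/2) * x)
              ((-(f x) - w' x ⬝ᵥ L.mulVec (w' x)) + (ε/2) * 1) x :=
            (hgd x).add ((hasDerivAt_id x).const_mul (ε/2))
          rw [hd.deriv]
          have h5 := hfon x hx'.1 hx'.2
          have h6 := hpsd (w' x)
          linarith
      have h7 := hanti2 (Set.mem_Icc.2 ⟨le_refl t, by linarith⟩)
        (Set.mem_Icc.2 ⟨by linarith, le_refl (t + δ)⟩) (by linarith)
      simp only at h7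
      -- g(t+δ) ≤ g t - εδ/2
      have h8 : g (t + δ) ≤ g t - ε / 2 * δ := by linarith
      have h9 : |g t - c| < ε * δ / 4 := hT t htT
      have h10 : g t < c + ε * δ / 4 := by
        have := abs_lt.1 h9; linarith [this.2]
      have h11 := hcle (t + δ)
      have hεδ : 0 < ε * δ := mul_pos hε hδpos
      nlinarith [h8, h10, h11, hεδ]
    rw [Real.dist_eq, sub_zero, abs_of_nonneg (hfnonneg t)]
    exact hft
  -- conclude w' → 0
  rw [tendsto_pi_nhds]
  intro i
  rw [show (0 : Fin m → ℝ) i = 0 from rfl]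
  apply squeeze_zero_norm (a := fun t => Real.sqrt (f t))
  · intro t
    have h1 : w' t i * w' t i ≤ f t := by
      rw [hfdef]; exact sqLeDotSelf (w' t) i
    have h2 : ‖w' t i‖ = Real.sqrt (w' t i * w' t i) := by
      rw [Real.norm_eq_abs, ← Real.sqrt_mul_self (abs_nonneg (w' t i)), abs_mul_abs_self]
    rw [h2]
    exact Real.sqrt_le_sqrt h1
  · have := (Real.continuous_sqrt.tendsto 0).comp hf0
    simpa [Function.comp_def] using this
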